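/- arXiv:2012.06394 — 2 statements merged into one kernel-verified Lean document; each statement's English description precedes it below -/
import Mathlib

section
/- For any (α,α′) ∈ ℝ^n × ℝ, the maximum of α·x + α′ y over (x,y) ∈ conv(G) equals max over k ∈ {0,…,n} of u Σ_{j=1}^k α_{σ(j)} + ℓ Σ_{j=k+1}^n α_{σ(j)} + α′·m(x^k), where σ is any permutation of {1,…,n} with α_{σ(1)} ≥ α_{σ(2)} ≥ … ≥ α_{σ(n)}. -/
open Finset

/-- The symmetric multilinear polynomial `m(x) = ∑_{i=2}^n c_i ∑_{|J|=i} ∏_{j∈J} x_j`. -/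
noncomputable def mPoly (n : ℕ) (c : ℕ → ℝ) (x : Fin n → ℝ) : ℝ :=
  ∑ i ∈ Finset.Icc 2 n, c i *
    ∑ J ∈ Finset.powersetCard i (Finset.univ : Finset (Fin n)), ∏ j ∈ J, x j

/-- The box `X = [ℓ,u]^n`. -/
def Xbox (n : ℕ) (ℓ u : ℝ) : Set (Fin n → ℝ) :=
  {x | ∀ j, x j ∈ Set.Icc ℓ u}

/-- The graph `G = {(x,y) : x ∈ X, y = m(x)}`. -/
def Gset (n : ℕ) (ℓ u : ℝ) (c : ℕ → ℝ) : Set ((Fin n → ℝ) × ℝ) :=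
  {p | p.1 ∈ Xbox n ℓ u ∧ p.2 = mPoly n c p.1}

/-- The point `x^k` whose first `k` coordinates are `u` and remaining ones are `ℓ`. -/
def xpt (n : ℕ) (ℓ u : ℝ) (k : ℕ) : Fin n → ℝ :=
  fun j => if (j : ℕ) < k then u else ℓ

/-- `m(x^k)`. -/
noncomputable def mval (n : ℕ) (ℓ u : ℝ) (c : ℕ → ℝ) (k : ℕ) : ℝ :=
  mPoly n c (xpt n ℓ u k)

/-- `L_k(β₀,β) = β₀ + u ∑_{j=1}^k β_j + ℓ ∑_{j=k+1}^n β_j`. -/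
noncomputable def Lk (n : ℕ) (ℓ u : ℝ) (β₀ : ℝ) (β : Fin n → ℝ) (k : ℕ) : ℝ :=
  β₀ + u * ∑ j ∈ Finset.univ.filter (fun j : Fin n => (j : ℕ) < k), β j
     + ℓ * ∑ j ∈ Finset.univ.filter (fun j : Fin n => k ≤ (j : ℕ)), β j

/-- The left-hand side `β₀ + ∑_j β_j x_j + β′ y` of an inequality, at the point `p = (x,y)`. -/
noncomputable def ineqLhs (n : ℕ) (β₀ : ℝ) (β : Fin n → ℝ) (β' : ℝ)
    (p : (Fin n → ℝ) × ℝ) : ℝ :=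
  β₀ + ∑ j, β j * p.1 j + β' * p.2

/-- A core inequality: `β′ ∈ {1,-1}` and nondecreasing coefficients `β₁ ≤ … ≤ βₙ`. -/
def IsCore (n : ℕ) (β : Fin n → ℝ) (β' : ℝ) : Prop :=
  (β' = 1 ∨ β' = -1) ∧ Monotone β

/-- Validity of the inequality `β₀ + ∑_j β_j x_j + β′ y ≥ 0` on `conv(G)`. -/
def IsValid (n : ℕ) (ℓ u : ℝ) (c : ℕ → ℝ) (β₀ : ℝ) (β : Fin n → ℝ) (β' : ℝ) : Prop :=
  ∀ p ∈ convexHull ℝ (Gset n ℓ u c), 0 ≤ ineqLhs n β₀ β β' p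

/-- The point `p` satisfies the inequality exactly (with equality). -/
def ExactAt (n : ℕ) (β₀ : ℝ) (β : Fin n → ℝ) (β' : ℝ) (p : (Fin n → ℝ) × ℝ) : Prop :=
  ineqLhs n β₀ β β' p = 0

/-- Facet-defining: there are `n+1` affinely independent points of `conv(G)`
satisfying the inequality exactly. -/
def IsFacet (n : ℕ) (ℓ u : ℝ) (c : ℕ → ℝ) (β₀ : ℝ) (β : Fin n → ℝ) (β' : ℝ) : Prop :=
  ∃ pts : Fin (n + 1) → (Fin n → ℝ) × ℝ,
    AffineIndependent ℝ pts ∧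
    ∀ i, pts i ∈ convexHull ℝ (Gset n ℓ u c) ∧ ExactAt n β₀ β β' (pts i)

/-- The point `(x^k, m(x^k))` of `G`. -/
noncomputable def vtx (n : ℕ) (ℓ u : ℝ) (c : ℕ → ℝ) (k : ℕ) : (Fin n → ℝ) × ℝ :=
  (xpt n ℓ u k, mval n ℓ u c k)

noncomputable def objF (n : ℕ) (c : ℕ → ℝ) (α : Fin n → ℝ) (α' : ℝ) (x : Fin n → ℝ) : ℝ :=
  ∑ j, α j * x j + α' * mPoly n c x

noncomputable def chi (n : ℕ) (ℓ u : ℝ) (S : Finset (Fin n)) : Fin n → ℝ :=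
  fun j => if j ∈ S then u else ℓ

lemma sum_update_lin (n : ℕ) (α x : Fin n → ℝ) (i : Fin n) (t : ℝ) :
    ∑ j, α j * Function.update x i t j
      = α i * t + ∑ j ∈ Finset.univ.erase i, α j * x j := by
  rw [← Finset.add_sum_erase _ _ (Finset.mem_univ i)]
  congr 1
  · simp
  · exact Finset.sum_congr rfl fun j hj => by
      rw [Function.update_of_ne (Finset.ne_of_mem_erase hj)]

lemma mPoly_update (n : ℕ) (c : ℕ → ℝ) (x : Fin n → ℝ) (i : Fin n) (t : ℝ) :
    mPoly n c (Function.update x i t)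
      = (∑ k ∈ Finset.Icc 2 n, c k *
          ∑ J ∈ (Finset.powersetCard k Finset.univ).filter (fun J => i ∉ J), ∏ j ∈ J, x j)
        + t * ∑ k ∈ Finset.Icc 2 n, c k *
          ∑ J ∈ (Finset.powersetCard k Finset.univ).filter (fun J => i ∈ J),
            ∏ j ∈ (J \ {i}), x j := by
  unfold mPoly
  rw [Finset.mul_sum, ← Finset.sum_add_distrib]
  refine Finset.sum_congr rfl fun k _ => ?_
  rw [← Finset.sum_filter_add_sum_filter_not (Finset.powersetCard k Finset.univ)
        (fun J => i ∈ J)]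
  have h1 : ∑ J ∈ (Finset.powersetCard k Finset.univ).filter (fun J => i ∈ J),
        ∏ j ∈ J, Function.update x i t j
      = t * ∑ J ∈ (Finset.powersetCard k Finset.univ).filter (fun J => i ∈ J),
        ∏ j ∈ (J \ {i}), x j := by
    rw [Finset.mul_sum]
    exact Finset.sum_congr rfl fun J hJ =>
      Finset.prod_update_of_mem (Finset.mem_filter.mp hJ).2 _ _
  have h2 : ∑ J ∈ (Finset.powersetCard k Finset.univ).filter (fun J => i ∉ J),
        ∏ j ∈ J, Function.update x i t j
      = ∑ J ∈ (Finset.powersetCard k Finset.univ).filter (fun J => i ∉ J),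
        ∏ j ∈ J, x j := by
    exact Finset.sum_congr rfl fun J hJ =>
      Finset.prod_update_of_notMem (Finset.mem_filter.mp hJ).2 _ _
  rw [h1, h2]
  ring

lemma objF_update_affine (n : ℕ) (c : ℕ → ℝ) (α : Fin n → ℝ) (α' : ℝ)
    (x : Fin n → ℝ) (i : Fin n) :
    ∃ a b : ℝ, ∀ t : ℝ, objF n c α α' (Function.update x i t) = a + b * t := by
  refine ⟨(∑ j ∈ Finset.univ.erase i, α j * x j)
      + α' * (∑ k ∈ Finset.Icc 2 n, c k *
          ∑ J ∈ (Finset.powersetCard k Finset.univ).filter (fun J => i ∉ J), ∏ j ∈ J, x j),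
    α i + α' * (∑ k ∈ Finset.Icc 2 n, c k *
          ∑ J ∈ (Finset.powersetCard k Finset.univ).filter (fun J => i ∈ J),
            ∏ j ∈ (J \ {i}), x j), fun t => ?_⟩
  rw [objF, sum_update_lin, mPoly_update]
  ring

lemma objF_le_round (n : ℕ) (c : ℕ → ℝ) (α : Fin n → ℝ) (α' : ℝ) {ℓ u : ℝ}
    (x : Fin n → ℝ) (hx : ∀ j, x j ∈ Set.Icc ℓ u) (i : Fin n) :
    objF n c α α' x ≤
      max (objF n c α α' (Function.update x i ℓ)) (objF n c α α' (Function.update x i u)) := by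
  obtain ⟨a, b, hab⟩ := objF_update_affine n c α α' x i
  have hx0 : objF n c α α' x = a + b * x i := by
    rw [← hab (x i), Function.update_eq_self]
  rcases le_total 0 b with hb | hb
  · refine le_max_of_le_right ?_
    rw [hab, hx0]
    nlinarith [(hx i).2]
  · refine le_max_of_le_left ?_
    rw [hab, hx0]
    nlinarith [(hx i).1]

lemma exists_rounded (n : ℕ) (c : ℕ → ℝ) (α : Fin n → ℝ) (α' : ℝ) {ℓ u : ℝ} (hlu : ℓ ≤ u)
    (T : Finset (Fin n)) :
    ∀ (x : Fin n → ℝ), (∀ j, x j ∈ Set.Icc ℓ u) →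
      ∃ y : Fin n → ℝ, (∀ j, y j ∈ Set.Icc ℓ u) ∧ (∀ j ∈ T, y j = ℓ ∨ y j = u) ∧
        objF n c α α' x ≤ objF n c α α' y := by
  induction T using Finset.induction_on with
  | empty => exact fun x hx => ⟨x, hx, by simp, le_rfl⟩
  | @insert a T _ ih =>
    intro x hx
    obtain ⟨y, hy, hyT, hxy⟩ := ih x hx
    have key : ∃ t : ℝ, (t = ℓ ∨ t = u) ∧
        objF n c α α' y ≤ objF n c α α' (Function.update y a t) := by
      rcases le_max_iff.mp (objF_le_round n c α α' y hy a) with h' | h'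
      · exact ⟨ℓ, Or.inl rfl, h'⟩
      · exact ⟨u, Or.inr rfl, h'⟩
    obtain ⟨t, ht, hle⟩ := key
    refine ⟨Function.update y a t, ?_, ?_, hxy.trans hle⟩
    · intro j
      rw [Function.update_apply]
      split_ifs
      · rcases ht with rfl | rfl
        exacts [⟨le_rfl, hlu⟩, ⟨hlu, le_rfl⟩]
      · exact hy j
    · intro j hj
      rw [Function.update_apply]
      split_ifs with hja
      · exact ht
      · rcases Finset.mem_insert.mp hj with rfl | hjT
        · exact absurd rfl hja
        · exact hyT j hjT

lemma exists_vertex (n : ℕ) (c : ℕ → ℝ) (α : Fin n → ℝ) (α' : ℝ) {ℓ u : ℝ} (hlu : ℓ ≤ u)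
    (x : Fin n → ℝ) (hx : ∀ j, x j ∈ Set.Icc ℓ u) :
    ∃ S : Finset (Fin n), objF n c α α' x ≤ objF n c α α' (chi n ℓ u S) := by
  obtain ⟨y, _, hyU, hxy⟩ := exists_rounded n c α α' hlu Finset.univ x hx
  refine ⟨Finset.univ.filter (fun j => y j = u), ?_⟩
  have hchi : chi n ℓ u (Finset.univ.filter (fun j => y j = u)) = y := by
    funext j
    by_cases hju : y j = u
    · simp [chi, hju]
    · have h2 : y j = ℓ := (hyU j (Finset.mem_univ j)).resolve_right hju
      show (if j ∈ Finset.univ.filter (fun j => y j = u) then u else ℓ) = y j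
      rw [if_neg (by simp [hju]), h2]
  rw [hchi]
  exact hxy

lemma mPoly_comp_equiv (n : ℕ) (c : ℕ → ℝ) (σ : Equiv.Perm (Fin n)) (x : Fin n → ℝ) :
    mPoly n c (fun j => x (σ j)) = mPoly n c x := by
  unfold mPoly
  refine Finset.sum_congr rfl fun k _ => ?_
  congr 1
  refine Finset.sum_nbij' (fun J => J.map σ.toEmbedding) (fun J => J.map σ.symm.toEmbedding)
    ?_ ?_ ?_ ?_ ?_
  · intro J hJ
    simp only [Finset.mem_powersetCard] at hJ ⊢
    exact ⟨Finset.subset_univ _, by rw [Finset.card_map]; exact hJ.2⟩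
  · intro J hJ
    simp only [Finset.mem_powersetCard] at hJ ⊢
    exact ⟨Finset.subset_univ _, by rw [Finset.card_map]; exact hJ.2⟩
  · intro J _
    ext j
    simp [Finset.mem_map, Equiv.symm_apply_eq]
  · intro J _
    ext j
    simp [Finset.mem_map, Equiv.eq_symm_apply]
  · intro J _
    rw [Finset.prod_map]
    rfl

lemma card_filter_lt (n k : ℕ) (hk : k ≤ n) :
    (Finset.univ.filter (fun j : Fin n => (j : ℕ) < k)).card = k := by
  have h : Finset.univ.filter (fun j : Fin n => (j : ℕ) < k)
      = Finset.map (Fin.castLEEmb hk) Finset.univ := by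
    ext j
    simp only [Finset.mem_filter, Finset.mem_univ, true_and, Finset.mem_map]
    constructor
    · intro hj
      exact ⟨⟨(j : ℕ), hj⟩, by ext; simp [Fin.castLEEmb]⟩
    · rintro ⟨i, rfl⟩
      simp [Fin.castLEEmb]
  rw [h, Finset.card_map, Finset.card_univ, Fintype.card_fin]

/-- A permutation carrying `S'` onto `S`, given equal cardinalities. -/
lemma exists_perm_mem_iff {n : ℕ} (S S' : Finset (Fin n)) (h : S.card = S'.card) :
    ∃ e : Equiv.Perm (Fin n), ∀ j, e j ∈ S ↔ j ∈ S' := by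
  classical
  have h1 : Fintype.card {x : Fin n // x ∈ S'} = Fintype.card {x : Fin n // x ∈ S} := by
    simp [Fintype.card_coe, h]
  have h2 : Fintype.card {x : Fin n // ¬ x ∈ S'} = Fintype.card {x : Fin n // ¬ x ∈ S} := by
    rw [Fintype.card_subtype_compl, Fintype.card_subtype_compl, Fintype.card_coe,
      Fintype.card_coe, h]
  let e1 : {x : Fin n // x ∈ S'} ≃ {x : Fin n // x ∈ S} := Fintype.equivOfCardEq h1
  let e2 : {x : Fin n // ¬ x ∈ S'} ≃ {x : Fin n // ¬ x ∈ S} := Fintype.equivOfCardEq h2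
  refine ⟨(Equiv.sumCompl (· ∈ S')).symm.trans ((e1.sumCongr e2).trans
    (Equiv.sumCompl (· ∈ S))), fun j => ?_⟩
  by_cases hj : j ∈ S'
  · simp only [Equiv.trans_apply, Equiv.sumCompl_symm_apply_of_pos hj,
      Equiv.sumCongr_apply, Sum.map_inl, Equiv.sumCompl_apply_inl]
    exact iff_of_true (e1 ⟨j, hj⟩).2 hj
  · simp only [Equiv.trans_apply, Equiv.sumCompl_symm_apply_of_neg hj,
      Equiv.sumCongr_apply, Sum.map_inr, Equiv.sumCompl_apply_inr]
    exact iff_of_false (e2 ⟨j, hj⟩).2 hj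

lemma mPoly_chi_card {n : ℕ} (c : ℕ → ℝ) (ℓ u : ℝ) (S S' : Finset (Fin n))
    (h : S.card = S'.card) :
    mPoly n c (chi n ℓ u S) = mPoly n c (chi n ℓ u S') := by
  obtain ⟨e, he⟩ := exists_perm_mem_iff S S' h
  have : chi n ℓ u S' = fun j => chi n ℓ u S (e j) := by
    funext j
    simp only [chi]
    by_cases hj : j ∈ S'
    · rw [if_pos hj, if_pos ((he j).mpr hj)]
    · rw [if_neg hj, if_neg (fun hc => hj ((he j).mp hc))]
  rw [this, mPoly_comp_equiv]

lemma sum_le_sorted {n : ℕ} (β : Fin n → ℝ) (hβ : ∀ i j : Fin n, i ≤ j → β j ≤ β i)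
    (S : Finset (Fin n)) :
    ∑ j ∈ S, β j ≤ ∑ j ∈ Finset.univ.filter (fun j : Fin n => (j : ℕ) < S.card), β j := by
  classical
  set k := S.card with hk
  set T := Finset.univ.filter (fun j : Fin n => (j : ℕ) < k) with hT
  have hkn : k ≤ n := by
    rw [hk]
    simpa using Finset.card_le_univ S
  have hTcard : S.card = T.card := by rw [hT, card_filter_lt n k hkn]
  have hdiff : (S \ T).card = (T \ S).card := Finset.card_sdiff_comm hTcard
  let g : {x : Fin n // x ∈ S \ T} ≃ {x : Fin n // x ∈ T \ S} := Finset.equivOfCardEq hdiff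
  have key : ∑ j ∈ S \ T, β j ≤ ∑ j ∈ T \ S, β j := by
    rw [← Finset.sum_coe_sort (S \ T) β, ← Finset.sum_coe_sort (T \ S) β,
      ← Equiv.sum_comp g (fun b : {x : Fin n // x ∈ T \ S} => β b)]
    refine Finset.sum_le_sum fun a _ => ?_
    have h1 : k ≤ ((a : Fin n) : ℕ) := by
      have := (Finset.mem_sdiff.mp a.2).2
      simp only [T, Finset.mem_filter, Finset.mem_univ, true_and, not_lt] at this
      exact this
    have h2 : (((g a : {x : Fin n // x ∈ T \ S}) : Fin n) : ℕ) < k := by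
      have := (Finset.mem_sdiff.mp (g a).2).1
      simp only [T, Finset.mem_filter, Finset.mem_univ, true_and] at this
      exact this
    exact hβ _ _ (Fin.le_def.mpr (le_of_lt (lt_of_lt_of_le h2 h1)))
  have hS : ∑ j ∈ S, β j = ∑ j ∈ S ∩ T, β j + ∑ j ∈ S \ T, β j :=
    (Finset.sum_inter_add_sum_sdiff S T β).symm
  have hT2 : ∑ j ∈ T, β j = ∑ j ∈ T ∩ S, β j + ∑ j ∈ T \ S, β j :=
    (Finset.sum_inter_add_sum_sdiff T S β).symm
  rw [Finset.inter_comm] at hS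
  rw [hS, hT2]
  exact add_le_add_right key _

lemma xpt_eq_chi (n : ℕ) (ℓ u : ℝ) (k : ℕ) :
    xpt n ℓ u k = chi n ℓ u (Finset.univ.filter (fun j : Fin n => (j : ℕ) < k)) := by
  funext j
  simp [xpt, chi]

lemma mPoly_chi (n : ℕ) (c : ℕ → ℝ) (ℓ u : ℝ) (S : Finset (Fin n)) :
    mPoly n c (chi n ℓ u S) = mval n ℓ u c S.card := by
  have hkn : S.card ≤ n := by simpa using Finset.card_le_univ S
  rw [mval, xpt_eq_chi]
  exact mPoly_chi_card c ℓ u S _ ((card_filter_lt n _ hkn).symm)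

lemma objF_chi (n : ℕ) (c : ℕ → ℝ) (α : Fin n → ℝ) (α' : ℝ) (ℓ u : ℝ) (S : Finset (Fin n)) :
    objF n c α α' (chi n ℓ u S) =
      u * ∑ j ∈ S, α j + ℓ * ∑ j ∈ Sᶜ, α j + α' * mval n ℓ u c S.card := by
  rw [objF, mPoly_chi]
  congr 1
  rw [← Finset.sum_add_sum_compl S (fun j => α j * chi n ℓ u S j)]
  congr 1
  · rw [Finset.mul_sum]
    refine Finset.sum_congr rfl fun j hj => ?_
    show α j * (if j ∈ S then u else ℓ) = u * α j
    rw [if_pos hj]; ring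
  · rw [Finset.mul_sum]
    refine Finset.sum_congr rfl fun j hj => ?_
    show α j * (if j ∈ S then u else ℓ) = ℓ * α j
    rw [if_neg (Finset.mem_compl.mp hj)]; ring

lemma filter_ge_eq_compl (n k : ℕ) :
    Finset.univ.filter (fun j : Fin n => k ≤ (j : ℕ))
      = (Finset.univ.filter (fun j : Fin n => (j : ℕ) < k))ᶜ := by
  ext j
  simp [not_lt]

lemma objF_chi_le (n : ℕ) (c : ℕ → ℝ) (α : Fin n → ℝ) (α' : ℝ) {ℓ u : ℝ} (hlu : ℓ ≤ u)
    (σ : Equiv.Perm (Fin n)) (hσ : ∀ i j : Fin n, i ≤ j → α (σ j) ≤ α (σ i))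
    (S : Finset (Fin n)) :
    objF n c α α' (chi n ℓ u S) ≤
      u * ∑ j ∈ Finset.univ.filter (fun j : Fin n => (j : ℕ) < S.card), α (σ j)
      + ℓ * ∑ j ∈ Finset.univ.filter (fun j : Fin n => S.card ≤ (j : ℕ)), α (σ j)
      + α' * mval n ℓ u c S.card := by
  rw [objF_chi]
  have hA : ∑ j ∈ S, α j
      ≤ ∑ j ∈ Finset.univ.filter (fun j : Fin n => (j : ℕ) < S.card), α (σ j) := by
    have himg : ∑ j ∈ S.image σ.symm, α (σ j) = ∑ j ∈ S, α j := by
      rw [Finset.sum_image (fun a _ b _ h => σ.symm.injective h)]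
      exact Finset.sum_congr rfl fun j _ => by rw [Equiv.apply_symm_apply]
    have hcard : (S.image σ.symm).card = S.card :=
      Finset.card_image_of_injective _ σ.symm.injective
    have h := sum_le_sorted (fun j => α (σ j)) hσ (S.image σ.symm)
    rw [himg, hcard] at h
    exact h
  have htot1 : ∑ j ∈ S, α j + ∑ j ∈ Sᶜ, α j = ∑ j, α j :=
    Finset.sum_add_sum_compl S α
  have htot2 : ∑ j ∈ Finset.univ.filter (fun j : Fin n => (j : ℕ) < S.card), α (σ j)
      + ∑ j ∈ Finset.univ.filter (fun j : Fin n => S.card ≤ (j : ℕ)), α (σ j)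
      = ∑ j, α j := by
    rw [filter_ge_eq_compl, Finset.sum_add_sum_compl]
    exact Equiv.sum_comp σ α
  have h2 : ∑ j ∈ Sᶜ, α j = (∑ j, α j) - ∑ j ∈ S, α j := by linarith
  have h3 : ∑ j ∈ Finset.univ.filter (fun j : Fin n => S.card ≤ (j : ℕ)), α (σ j)
      = (∑ j, α j) - ∑ j ∈ Finset.univ.filter (fun j : Fin n => (j : ℕ) < S.card), α (σ j) := by
    linarith
  rw [h2, h3]
  nlinarith [mul_nonneg (sub_nonneg.mpr hlu) (sub_nonneg.mpr hA)]

lemma chi_mem_Xbox (n : ℕ) {ℓ u : ℝ} (hlu : ℓ ≤ u) (S : Finset (Fin n)) :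
    chi n ℓ u S ∈ Xbox n ℓ u := by
  intro j
  show (if j ∈ S then u else ℓ) ∈ Set.Icc ℓ u
  split_ifs
  · exact ⟨hlu, le_rfl⟩
  · exact ⟨le_rfl, hlu⟩

lemma objFun_convexOn (n : ℕ) (α : Fin n → ℝ) (α' : ℝ) :
    ConvexOn ℝ Set.univ (fun p : (Fin n → ℝ) × ℝ => ∑ j, α j * p.1 j + α' * p.2) := by
  refine ⟨convex_univ, fun p _ q _ a b _ _ _ => le_of_eq ?_⟩
  show ∑ j, α j * (a • p + b • q).1 j + α' * (a • p + b • q).2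
      = a • (∑ j, α j * p.1 j + α' * p.2) + b • (∑ j, α j * q.1 j + α' * q.2)
  have h1 : ∀ j, (a • p + b • q).1 j = a * p.1 j + b * q.1 j := fun j => rfl
  have h2 : (a • p + b • q).2 = a * p.2 + b * q.2 := rfl
  simp only [h1, h2, smul_eq_mul]
  have h3 : ∑ j, α j * (a * p.1 j + b * q.1 j)
      = a * ∑ j, α j * p.1 j + b * ∑ j, α j * q.1 j := by
    rw [Finset.mul_sum, Finset.mul_sum, ← Finset.sum_add_distrib]
    exact Finset.sum_congr rfl fun j _ => by ring
  rw [h3]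
  ring


/-- Linear optimization over `conv(G)` reduces to a maximum over the
`n+1` points `(x^k, m(x^k))`, after sorting the objective coefficients decreasingly. -/
theorem stmt1 (n : ℕ) (hn : 2 ≤ n) (ℓ u : ℝ) (hlu : ℓ < u) (c : ℕ → ℝ)
    (α : Fin n → ℝ) (α' : ℝ) (σ : Equiv.Perm (Fin n))
    (hσ : ∀ i j : Fin n, i ≤ j → α (σ j) ≤ α (σ i)) :
    IsGreatest {v : ℝ | ∃ p ∈ convexHull ℝ (Gset n ℓ u c), v = ∑ j, α j * p.1 j + α' * p.2}
      ((Finset.range (n + 1)).sup' Finset.nonempty_range_add_one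
        (fun k =>
          u * ∑ j ∈ Finset.univ.filter (fun j : Fin n => (j : ℕ) < k), α (σ j)
          + ℓ * ∑ j ∈ Finset.univ.filter (fun j : Fin n => k ≤ (j : ℕ)), α (σ j)
          + α' * mval n ℓ u c k)) := by
  classical
  set f : (Fin n → ℝ) × ℝ → ℝ := fun p => ∑ j, α j * p.1 j + α' * p.2 with hf
  set tf : ℕ → ℝ := fun k =>
      u * ∑ j ∈ Finset.univ.filter (fun j : Fin n => (j : ℕ) < k), α (σ j)
      + ℓ * ∑ j ∈ Finset.univ.filter (fun j : Fin n => k ≤ (j : ℕ)), α (σ j)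
      + α' * mval n ℓ u c k with htf
  constructor
  · -- the sup is attained
    obtain ⟨k0, hk0, hsup⟩ := Finset.exists_mem_eq_sup' Finset.nonempty_range_add_one tf
    have hk0n : k0 ≤ n := Nat.lt_succ_iff.mp (Finset.mem_range.mp hk0)
    set T : Finset (Fin n) := Finset.univ.filter (fun j : Fin n => (j : ℕ) < k0) with hT
    set S : Finset (Fin n) := T.image σ with hS
    have hScard : S.card = k0 := by
      rw [hS, Finset.card_image_of_injective _ σ.injective, hT, card_filter_lt n k0 hk0n]
    refine ⟨(chi n ℓ u S, mPoly n c (chi n ℓ u S)),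
      subset_convexHull ℝ _ ⟨chi_mem_Xbox n hlu.le S, rfl⟩, ?_⟩
    rw [hsup]
    show tf k0 = f (chi n ℓ u S, mPoly n c (chi n ℓ u S))
    have hval : f (chi n ℓ u S, mPoly n c (chi n ℓ u S)) = objF n c α α' (chi n ℓ u S) := rfl
    rw [hval, objF_chi, hScard]
    have hsum1 : ∑ j ∈ S, α j = ∑ j ∈ T, α (σ j) := by
      rw [hS, Finset.sum_image (fun a _ b _ h => σ.injective h)]
    have htot1 : ∑ j ∈ S, α j + ∑ j ∈ Sᶜ, α j = ∑ j, α j :=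
      Finset.sum_add_sum_compl S α
    have htot2 : ∑ j ∈ T, α (σ j)
        + ∑ j ∈ Finset.univ.filter (fun j : Fin n => k0 ≤ (j : ℕ)), α (σ j)
        = ∑ j, α j := by
      rw [hT, filter_ge_eq_compl, Finset.sum_add_sum_compl]
      exact Equiv.sum_comp σ α
    have hsum2 : ∑ j ∈ Sᶜ, α j
        = ∑ j ∈ Finset.univ.filter (fun j : Fin n => k0 ≤ (j : ℕ)), α (σ j) := by
      linarith [htot1, htot2, hsum1]
    rw [htf, hsum1, hsum2]
  · -- upper bound
    rintro v ⟨p, hp, rfl⟩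
    obtain ⟨q, hq, hpq⟩ :=
      (objFun_convexOn n α α').exists_ge_of_mem_convexHull (Set.subset_univ _) hp
    obtain ⟨hqX, hqy⟩ := hq
    have hfq : f q = objF n c α α' q.1 := by
      show ∑ j, α j * q.1 j + α' * q.2 = _
      rw [objF, hqy]
    obtain ⟨S, hSle⟩ := exists_vertex n c α α' hlu.le q.1 hqX
    have hmem : S.card ∈ Finset.range (n + 1) := by
      have : S.card ≤ n := by simpa using Finset.card_le_univ S
      exact Finset.mem_range.mpr (Nat.lt_succ_of_le this)
    calc f p ≤ f q := hpq
      _ = objF n c α α' q.1 := hfq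
      _ ≤ objF n c α α' (chi n ℓ u S) := hSle
      _ ≤ tf S.card := objF_chi_le n c α α' hlu.le σ hσ S
      _ ≤ _ := Finset.le_sup' tf hmem
end

section
/- If a valid core inequality β₀ + Σ_{j=1}^n β_j x_j + β′ y ≥ 0 is a core facet of conv(G), then it is satisfied exactly at (x^k, m(x^k)) for at least two indices k ∈ {0,…,n}, at least one of which lies in {1,…,n−1}. -/
open Finset

section AuxLemmas

variable {n : ℕ} {ℓ u : ℝ} {c : ℕ → ℝ} {β₀ : ℝ} {β : Fin n → ℝ} {β' : ℝ}

lemma mPoly_update_s4 (n : ℕ) (c : ℕ → ℝ) (x : Fin n → ℝ) (j : Fin n) :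
    ∃ a b : ℝ, ∀ t, mPoly n c (Function.update x j t) = a + b * t := by
  classical
  refine ⟨∑ i ∈ Finset.Icc 2 n, c i * ∑ J ∈ (Finset.powersetCard i (univ : Finset (Fin n))).filter (fun J => ¬ j ∈ J), ∏ k ∈ J, x k,
         ∑ i ∈ Finset.Icc 2 n, c i * ∑ J ∈ (Finset.powersetCard i (univ : Finset (Fin n))).filter (fun J => j ∈ J), ∏ k ∈ J.erase j, x k, ?_⟩
  intro t
  unfold mPoly
  have key : ∀ i, ∑ J ∈ Finset.powersetCard i (univ : Finset (Fin n)), ∏ k ∈ J, Function.update x j t k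
      = (∑ J ∈ (Finset.powersetCard i (univ : Finset (Fin n))).filter (fun J => ¬ j ∈ J), ∏ k ∈ J, x k)
        + (∑ J ∈ (Finset.powersetCard i (univ : Finset (Fin n))).filter (fun J => j ∈ J), ∏ k ∈ J.erase j, x k) * t := by
    intro i
    rw [← Finset.sum_filter_add_sum_filter_not (Finset.powersetCard i (univ : Finset (Fin n))) (fun J => j ∈ J)]
    have h1 : ∀ J ∈ (Finset.powersetCard i (univ : Finset (Fin n))).filter (fun J => j ∈ J),
        ∏ k ∈ J, Function.update x j t k = t * ∏ k ∈ J.erase j, x k := by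
      intro J hJ
      have hjJ : j ∈ J := (Finset.mem_filter.mp hJ).2
      rw [← Finset.mul_prod_erase J _ hjJ, Function.update_self]
      congr 1
      exact Finset.prod_congr rfl (fun k hk => Function.update_of_ne (Finset.ne_of_mem_erase hk) _ _)
    have h2 : ∀ J ∈ (Finset.powersetCard i (univ : Finset (Fin n))).filter (fun J => ¬ j ∈ J),
        ∏ k ∈ J, Function.update x j t k = ∏ k ∈ J, x k := by
      intro J hJ
      exact Finset.prod_congr rfl (fun k hk => Function.update_of_ne
        (fun h => (Finset.mem_filter.mp hJ).2 (by rw [← h]; exact hk)) _ _)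
    rw [Finset.sum_congr rfl h1, Finset.sum_congr rfl h2, ← Finset.mul_sum]
    ring
  rw [Finset.sum_congr rfl (fun i _ => by rw [key i])]
  rw [Finset.sum_congr rfl (fun i (_ : i ∈ Finset.Icc 2 n) => mul_add (c i) _ _), Finset.sum_add_distrib]
  congr 1
  rw [Finset.sum_mul]
  exact Finset.sum_congr rfl (fun i _ => by ring)

lemma mPoly_comp_perm (n : ℕ) (c : ℕ → ℝ) (x : Fin n → ℝ) (σ : Equiv.Perm (Fin n)) :
    mPoly n c (x ∘ σ) = mPoly n c x := by
  classical
  unfold mPoly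
  refine Finset.sum_congr rfl fun i _ => ?_
  congr 1
  refine Finset.sum_nbij' (fun J => J.image σ) (fun J => J.image σ.symm) ?_ ?_ ?_ ?_ ?_
  · intro J hJ
    rw [Finset.mem_powersetCard] at hJ ⊢
    exact ⟨Finset.subset_univ _, by rw [Finset.card_image_of_injective _ σ.injective, hJ.2]⟩
  · intro J hJ
    rw [Finset.mem_powersetCard] at hJ ⊢
    exact ⟨Finset.subset_univ _, by rw [Finset.card_image_of_injective _ σ.symm.injective, hJ.2]⟩
  · intro J _
    simp [Finset.image_image]
  · intro J _
    simp [Finset.image_image]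
  · intro J _
    rw [Finset.prod_image (fun a _ b _ h => σ.injective h)]
    rfl

lemma exists_perm (n : ℕ) (U F : Finset (Fin n)) (h : U.card = F.card) :
    ∃ σ : Equiv.Perm (Fin n), ∀ j, j ∈ U ↔ σ j ∈ F := by
  classical
  have h' : Uᶜ.card = Fᶜ.card := by simp [Finset.card_compl, h]
  let e : {x // x ∈ U} ≃ {x // x ∈ F} := Finset.equivOfCardEq h
  let e'' : {x // ¬ x ∈ U} ≃ {x // ¬ x ∈ F} :=
    ((Equiv.subtypeEquivRight (fun x => by simp)).trans
      ((Finset.equivOfCardEq h' : {x // x ∈ Uᶜ} ≃ {x // x ∈ Fᶜ}).trans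
        (Equiv.subtypeEquivRight (fun x => by simp))))
  refine ⟨(Equiv.sumCompl (· ∈ U)).symm.trans ((e.sumCongr e'').trans (Equiv.sumCompl (· ∈ F))), ?_⟩
  intro j
  by_cases hj : j ∈ U
  · simp only [Equiv.trans_apply, Equiv.sumCompl_symm_apply_of_pos hj, Equiv.sumCongr_apply,
      Sum.map_inl, Equiv.sumCompl_apply_inl]
    exact ⟨fun _ => (e ⟨j, hj⟩).2, fun _ => hj⟩
  · simp only [Equiv.trans_apply, Equiv.sumCompl_symm_apply_of_neg hj, Equiv.sumCongr_apply,
      Sum.map_inr, Equiv.sumCompl_apply_inr]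
    exact ⟨fun hc => absurd hc hj, fun hc => absurd hc (e'' ⟨j, hj⟩).2⟩

lemma filter_lt_card (n k : ℕ) (hk : k ≤ n) :
    ((univ : Finset (Fin n)).filter (fun j : Fin n => (j : ℕ) < k)).card = k := by
  have : (univ : Finset (Fin n)).filter (fun j : Fin n => (j : ℕ) < k)
      = Finset.map ⟨Fin.castLE hk, Fin.castLE_injective hk⟩ univ := by
    ext j
    simp only [Finset.mem_filter, Finset.mem_univ, true_and, Finset.mem_map,
      Function.Embedding.coeFn_mk]
    constructor
    · intro hj; exact ⟨⟨(j : ℕ), hj⟩, by ext; simp⟩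
    · rintro ⟨i, rfl⟩; exact i.2
  rw [this, Finset.card_map, Finset.card_univ, Fintype.card_fin]

lemma vertex_eq_xpt (n : ℕ) (ℓ u : ℝ) (v : Fin n → ℝ)
    (hv : ∀ j, v j = ℓ ∨ v j = u) :
    ∃ σ : Equiv.Perm (Fin n),
      v = xpt n ℓ u ((univ : Finset (Fin n)).filter (fun j : Fin n => v j = u)).card ∘ σ := by
  classical
  set U := (univ : Finset (Fin n)).filter (fun j : Fin n => v j = u) with hU
  set k := U.card with hk
  have hkn : k ≤ n := by
    calc k ≤ (univ : Finset (Fin n)).card := Finset.card_filter_le _ _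
    _ = n := by simp
  have hF : ((univ : Finset (Fin n)).filter (fun j : Fin n => (j : ℕ) < k)).card = k :=
    filter_lt_card n k hkn
  obtain ⟨σ, hσ⟩ := exists_perm n U ((univ : Finset (Fin n)).filter (fun j : Fin n => (j : ℕ) < k))
    (by rw [hF])
  refine ⟨σ, funext fun j => ?_⟩
  by_cases hj : j ∈ U
  · have h1 : v j = u := (Finset.mem_filter.mp hj).2
    have h2 : ((σ j : Fin n) : ℕ) < k := (Finset.mem_filter.mp ((hσ j).mp hj)).2
    simp [xpt, h2, h1]
  · have h1 : v j = ℓ := by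
      rcases hv j with h | h
      · exact h
      · exact absurd (Finset.mem_filter.mpr ⟨Finset.mem_univ j, h⟩ : j ∈ U) hj
    have h2 : ¬ ((σ j : Fin n) : ℕ) < k := by
      intro hc
      exact hj ((hσ j).mpr (Finset.mem_filter.mpr ⟨Finset.mem_univ _, hc⟩))
    simp [xpt, h2, h1]

lemma sum_smallest_le (n k : ℕ) (β : Fin n → ℝ) (hβ : Monotone β) (U : Finset (Fin n))
    (hU : U.card = k) :
    ∑ j ∈ (univ : Finset (Fin n)).filter (fun j : Fin n => (j : ℕ) < k), β j
      ≤ ∑ j ∈ U, β j := by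
  classical
  have hkn : k ≤ n := by rw [← hU]; simpa using Finset.card_le_univ U
  set f := U.orderEmbOfFin hU with hf
  have hle : ∀ m (h : m < k), m ≤ ((f ⟨m, h⟩ : Fin n) : ℕ) := by
    intro m
    induction m with
    | zero => intro h; exact Nat.zero_le _
    | succ m IH =>
      intro h
      have hm : m < k := Nat.lt_of_succ_lt h
      have h1 : f ⟨m, hm⟩ < f ⟨m + 1, h⟩ := f.strictMono (by simp [Fin.lt_def])
      have h2 := IH hm
      have h3 : ((f ⟨m, hm⟩ : Fin n) : ℕ) < ((f ⟨m + 1, h⟩ : Fin n) : ℕ) := h1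
      omega
  have hUim : U = Finset.image f Finset.univ := by
    ext j
    simp only [Finset.mem_image, Finset.mem_univ, true_and]
    constructor
    · intro hj
      have : j ∈ Set.range f := by rw [Finset.range_orderEmbOfFin]; exact hj
      obtain ⟨i, hi⟩ := this; exact ⟨i, hi⟩
    · rintro ⟨i, rfl⟩; exact Finset.orderEmbOfFin_mem U hU i
  set g : Fin k → Fin n := fun i => ⟨(i : ℕ), lt_of_lt_of_le i.2 hkn⟩ with hg
  have hFim : (univ : Finset (Fin n)).filter (fun j : Fin n => (j : ℕ) < k)
      = Finset.image g Finset.univ := by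
    ext j
    simp only [Finset.mem_filter, Finset.mem_univ, true_and, Finset.mem_image]
    constructor
    · intro hj; exact ⟨⟨(j : ℕ), hj⟩, by ext; rfl⟩
    · rintro ⟨i, rfl⟩; exact i.2
  rw [hUim, hFim, Finset.sum_image (g := g) (fun a _ b _ hab => by apply Fin.ext; have h2 := congrArg Fin.val hab; simpa [hg] using h2),
    Finset.sum_image (g := ⇑f) (fun a _ b _ hab => f.injective hab)]
  apply Finset.sum_le_sum
  intro i _
  apply hβ
  rw [Fin.le_def]
  simpa [hg] using hle (i : ℕ) i.2

lemma vertex_sum (n : ℕ) (ℓ u : ℝ) (v : Fin n → ℝ) (hv : ∀ j, v j = ℓ ∨ v j = u)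
    (w : Fin n → ℝ) :
    ∑ j, w j * v j
      = ℓ * ∑ j, w j
        + (u - ℓ) * ∑ j ∈ (univ : Finset (Fin n)).filter (fun j : Fin n => v j = u), w j := by
  classical
  have h1 : ∀ j : Fin n, w j * v j = w j * ℓ + w j * (v j - ℓ) := fun j => by ring
  rw [Finset.sum_congr rfl (fun j _ => h1 j), Finset.sum_add_distrib]
  congr 1
  · rw [Finset.mul_sum]
    exact Finset.sum_congr rfl (fun j _ => by ring)
  · rw [← Finset.sum_subset (Finset.filter_subset (fun j : Fin n => v j = u) univ)
      (fun x _ hx => by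
        have hxl : v x = ℓ := (hv x).resolve_right
          (fun h => hx (Finset.mem_filter.mpr ⟨Finset.mem_univ x, h⟩))
        rw [hxl]; ring)]
    rw [Finset.mul_sum]
    exact Finset.sum_congr rfl (fun j hj => by rw [(Finset.mem_filter.mp hj).2]; ring)

end AuxLemmas

noncomputable def gf (n : ℕ) (c : ℕ → ℝ) (β₀ : ℝ) (β : Fin n → ℝ) (β' : ℝ)
    (x : Fin n → ℝ) : ℝ :=
  ineqLhs n β₀ β β' (x, mPoly n c x)

lemma gf_nonneg {n : ℕ} {ℓ u : ℝ} {c : ℕ → ℝ} {β₀ : ℝ} {β : Fin n → ℝ} {β' : ℝ}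
    (hvalid : IsValid n ℓ u c β₀ β β') (x : Fin n → ℝ) (hx : x ∈ Xbox n ℓ u) :
    0 ≤ gf n c β₀ β β' x :=
  hvalid _ (subset_convexHull ℝ _ ⟨hx, rfl⟩)

lemma gf_update (n : ℕ) (c : ℕ → ℝ) (β₀ : ℝ) (β : Fin n → ℝ) (β' : ℝ)
    (x : Fin n → ℝ) (j : Fin n) :
    ∃ a b : ℝ, ∀ t, gf n c β₀ β β' (Function.update x j t) = a + b * t := by
  classical
  obtain ⟨am, bm, hm⟩ := mPoly_update_s4 n c x j
  refine ⟨β₀ + (∑ m ∈ Finset.univ.erase j, β m * x m) + β' * am, β j + β' * bm, ?_⟩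
  intro t
  unfold gf ineqLhs
  simp only
  rw [hm t]
  have hsum : ∑ m, β m * Function.update x j t m
      = β j * t + ∑ m ∈ Finset.univ.erase j, β m * x m := by
    rw [← Finset.add_sum_erase _ _ (Finset.mem_univ j), Function.update_self]
    congr 1
    exact Finset.sum_congr rfl (fun m hm' => by
      rw [Function.update_of_ne (Finset.ne_of_mem_erase hm') _ _])
  rw [hsum]; ring

lemma tight_ind (n : ℕ) (ℓ u : ℝ) (hlu : ℓ < u) (c : ℕ → ℝ) (β₀ : ℝ) (β : Fin n → ℝ) (β' : ℝ)
    (hvalid : IsValid n ℓ u c β₀ β β')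
    (C : Set ((Fin n → ℝ) × ℝ)) (hC : Convex ℝ C)
    (hvert : ∀ v : Fin n → ℝ, (∀ j, v j = ℓ ∨ v j = u) → gf n c β₀ β β' v = 0
       → (v, mPoly n c v) ∈ C) :
    ∀ x ∈ Xbox n ℓ u, gf n c β₀ β β' x = 0 → (x, mPoly n c x) ∈ C := by
  classical
  suffices H : ∀ d : ℕ, ∀ x : Fin n → ℝ,
      ((univ : Finset (Fin n)).filter (fun j => ¬ (x j = ℓ ∨ x j = u))).card = d →
      x ∈ Xbox n ℓ u → gf n c β₀ β β' x = 0 → (x, mPoly n c x) ∈ C by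
    intro x hx h0; exact H _ x rfl hx h0
  intro d
  induction d using Nat.strong_induction_on with
  | _ d IH =>
  intro x hd hx h0
  by_cases hall : ∀ j, x j = ℓ ∨ x j = u
  · exact hvert x hall h0
  · push_neg at hall
    obtain ⟨j, hj⟩ := hall
    have hjmem : j ∈ (univ : Finset (Fin n)).filter (fun j => ¬ (x j = ℓ ∨ x j = u)) :=
      Finset.mem_filter.mpr ⟨Finset.mem_univ j, not_or.mpr hj⟩
    have hxj := hx j
    rw [Set.mem_Icc] at hxj
    have hlx : ℓ < x j := lt_of_le_of_ne hxj.1 (Ne.symm hj.1)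
    have hxu : x j < u := lt_of_le_of_ne hxj.2 hj.2
    have hul : (0:ℝ) < u - ℓ := by linarith
    set lam := (u - x j) / (u - ℓ) with hlam
    have hlam0 : 0 < lam := div_pos (by linarith) hul
    have hlam1 : lam < 1 := by rw [hlam, div_lt_one hul]; linarith
    have hmix : lam * ℓ + (1 - lam) * u = x j := by
      rw [hlam]; field_simp; ring
    set xl := Function.update x j ℓ with hxl
    set xu := Function.update x j u with hxu'
    have hxlX : xl ∈ Xbox n ℓ u := by
      intro m
      rw [Set.mem_Icc]
      rcases eq_or_ne m j with rfl | hmj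
      · simp only [hxl, Function.update_self]; exact ⟨le_refl _, hlu.le⟩
      · rw [hxl, Function.update_of_ne hmj]
        have := hx m; rw [Set.mem_Icc] at this; exact this
    have hxuX : xu ∈ Xbox n ℓ u := by
      intro m
      rw [Set.mem_Icc]
      rcases eq_or_ne m j with rfl | hmj
      · simp only [hxu', Function.update_self]; exact ⟨hlu.le, le_refl _⟩
      · rw [hxu', Function.update_of_ne hmj]
        have := hx m; rw [Set.mem_Icc] at this; exact this
    obtain ⟨a, b, hab⟩ := gf_update n c β₀ β β' x j
    obtain ⟨am, bm, habm⟩ := mPoly_update_s4 n c x j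
    have hgx : a + b * x j = 0 := by
      have h1 := hab (x j)
      rw [Function.update_eq_self] at h1
      rw [← h1]; exact h0
    have hgl0 : 0 ≤ gf n c β₀ β β' xl := gf_nonneg hvalid xl hxlX
    have hgu0 : 0 ≤ gf n c β₀ β β' xu := gf_nonneg hvalid xu hxuX
    have hgl : gf n c β₀ β β' xl = a + b * ℓ := hab ℓ
    have hgu : gf n c β₀ β β' xu = a + b * u := hab u
    have hcomb : lam * gf n c β₀ β β' xl + (1 - lam) * gf n c β₀ β β' xu = 0 := by
      rw [hgl, hgu]
      have : lam * (a + b * ℓ) + (1 - lam) * (a + b * u)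
          = a + b * (lam * ℓ + (1 - lam) * u) := by ring
      rw [this, hmix, hgx]
    have h1' : 0 ≤ lam * gf n c β₀ β β' xl := mul_nonneg hlam0.le hgl0
    have h2' : 0 ≤ (1 - lam) * gf n c β₀ β β' xu := mul_nonneg (by linarith) hgu0
    have hl0 : gf n c β₀ β β' xl = 0 := by
      have hz : lam * gf n c β₀ β β' xl = 0 := by linarith
      exact (mul_eq_zero.mp hz).resolve_left (ne_of_gt hlam0)
    have hu0 : gf n c β₀ β β' xu = 0 := by
      have hz : (1 - lam) * gf n c β₀ β β' xu = 0 := by linarith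
      exact (mul_eq_zero.mp hz).resolve_left (by intro hcon; linarith)
    have hdpos : 1 ≤ d := by
      rw [← hd]; exact Finset.card_pos.mpr ⟨j, hjmem⟩
    have hcardl : ((univ : Finset (Fin n)).filter (fun m => ¬ (xl m = ℓ ∨ xl m = u))).card < d := by
      have hfe : (univ : Finset (Fin n)).filter (fun m => ¬ (xl m = ℓ ∨ xl m = u))
          = ((univ : Finset (Fin n)).filter (fun m => ¬ (x m = ℓ ∨ x m = u))).erase j := by
        ext m
        rcases eq_or_ne m j with rfl | hmj
        · simp [hxl]
        · simp [hxl, Function.update_of_ne hmj, hmj]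
      rw [hfe, Finset.card_erase_of_mem hjmem, hd]
      omega
    have hcardu : ((univ : Finset (Fin n)).filter (fun m => ¬ (xu m = ℓ ∨ xu m = u))).card < d := by
      have hfe : (univ : Finset (Fin n)).filter (fun m => ¬ (xu m = ℓ ∨ xu m = u))
          = ((univ : Finset (Fin n)).filter (fun m => ¬ (x m = ℓ ∨ x m = u))).erase j := by
        ext m
        rcases eq_or_ne m j with rfl | hmj
        · simp [hxu']
        · simp [hxu', Function.update_of_ne hmj, hmj]
      rw [hfe, Finset.card_erase_of_mem hjmem, hd]
      omega
    have hmemL := IH _ hcardl xl rfl hxlX hl0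
    have hmemU := IH _ hcardu xu rfl hxuX hu0
    have hx_eq : x = lam • xl + (1 - lam) • xu := by
      funext m
      rcases eq_or_ne m j with rfl | hmj
      · simp only [Pi.add_apply, Pi.smul_apply, smul_eq_mul, hxl, hxu', Function.update_self]
        exact hmix.symm
      · simp only [Pi.add_apply, Pi.smul_apply, smul_eq_mul, hxl, hxu',
          Function.update_of_ne hmj]
        ring
    have hm_eq : mPoly n c x = lam * mPoly n c xl + (1 - lam) * mPoly n c xu := by
      have h1 : mPoly n c x = am + bm * x j := by
        have := habm (x j)
        rwa [Function.update_eq_self] at this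
      rw [h1, hxl, hxu', habm ℓ, habm u]
      have : lam * (am + bm * ℓ) + (1 - lam) * (am + bm * u)
          = am + bm * (lam * ℓ + (1 - lam) * u) := by ring
      rw [this, hmix]
    have hpair : ((x, mPoly n c x) : (Fin n → ℝ) × ℝ)
        = lam • (xl, mPoly n c xl) + (1 - lam) • (xu, mPoly n c xu) := by
      rw [Prod.ext_iff]
      constructor
      · simpa using hx_eq
      · simpa using hm_eq
    rw [hpair]
    exact hC hmemL hmemU hlam0.le (by linarith) (by ring)

lemma tight_mem (n : ℕ) (ℓ u : ℝ) (c : ℕ → ℝ) (β₀ : ℝ) (β : Fin n → ℝ) (β' : ℝ)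
    (hvalid : IsValid n ℓ u c β₀ β β')
    (C : Set ((Fin n → ℝ) × ℝ)) (hC : Convex ℝ C)
    (hc : ∀ q ∈ Gset n ℓ u c, ineqLhs n β₀ β β' q = 0 → q ∈ C)
    (p : (Fin n → ℝ) × ℝ) (hp : p ∈ convexHull ℝ (Gset n ℓ u c))
    (h0 : ineqLhs n β₀ β β' p = 0) : p ∈ C := by
  classical
  rw [_root_.convexHull_eq] at hp
  obtain ⟨ι, t, w, z, hw0, hw1, hz, hcm⟩ := hp
  have hsum : p = ∑ i ∈ t, w i • z i := by
    rw [← hcm]; exact Finset.centerMass_eq_of_sum_1 t z hw1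
  have hfst : ∀ j, p.1 j = ∑ i ∈ t, w i * (z i).1 j := by
    intro j
    rw [hsum, Prod.fst_sum, Finset.sum_apply]
    exact Finset.sum_congr rfl (fun i _ => by simp)
  have hsnd : p.2 = ∑ i ∈ t, w i * (z i).2 := by
    rw [hsum, Prod.snd_sum]
    exact Finset.sum_congr rfl (fun i _ => by simp)
  have hexp : ∑ i ∈ t, w i * ineqLhs n β₀ β β' (z i) = ineqLhs n β₀ β β' p := by
    unfold ineqLhs
    have e0 : ∀ i ∈ t, w i * (β₀ + (∑ j, β j * (z i).1 j) + β' * (z i).2)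
        = w i * β₀ + (∑ j, β j * (w i * (z i).1 j)) + β' * (w i * (z i).2) := by
      intro i _
      have h' : w i * (β₀ + (∑ j, β j * (z i).1 j) + β' * (z i).2)
          = w i * β₀ + w i * ∑ j, β j * (z i).1 j + β' * (w i * (z i).2) := by ring
      rw [h', Finset.mul_sum]
      congr 2
      exact Finset.sum_congr rfl fun j _ => by ring
    rw [Finset.sum_congr rfl e0, Finset.sum_add_distrib, Finset.sum_add_distrib]
    congr 1
    · congr 1
      · rw [← Finset.sum_mul, hw1, one_mul]
      · rw [Finset.sum_comm]
        refine Finset.sum_congr rfl fun j _ => ?_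
        rw [hfst j, Finset.mul_sum]
    · rw [← Finset.mul_sum, ← hsnd]
  have hterms : ∀ i ∈ t, w i * ineqLhs n β₀ β β' (z i) = 0 := by
    refine (Finset.sum_eq_zero_iff_of_nonneg ?_).mp (by rw [hexp, h0])
    intro i hi
    exact mul_nonneg (hw0 i hi) (hvalid _ (subset_convexHull ℝ _ (hz i hi)))
  have hps : p = ∑ i ∈ t.filter (fun i => w i ≠ 0), w i • z i := by
    rw [hsum]
    symm
    apply Finset.sum_filter_of_ne
    intro i _ hne hw'
    exact hne (by rw [hw', zero_smul])
  have hws : ∑ i ∈ t.filter (fun i => w i ≠ 0), w i = 1 := by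
    rw [Finset.sum_filter_of_ne (fun i _ hne => hne)]
    exact hw1
  rw [hps]
  refine hC.sum_mem (fun i hi => hw0 i (Finset.mem_filter.mp hi).1) hws (fun i hi => ?_)
  obtain ⟨hit, hwne⟩ := Finset.mem_filter.mp hi
  have hLz : ineqLhs n β₀ β β' (z i) = 0 := (mul_eq_zero.mp (hterms i hit)).resolve_left hwne
  exact hc _ (hz i hit) hLz

lemma vertex_tight (n : ℕ) (ℓ u : ℝ) (hlu : ℓ < u) (c : ℕ → ℝ) (β₀ : ℝ) (β : Fin n → ℝ)
    (β' : ℝ) (hβ : Monotone β) (hvalid : IsValid n ℓ u c β₀ β β')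
    (v : Fin n → ℝ) (hv : ∀ j, v j = ℓ ∨ v j = u) (h0 : gf n c β₀ β β' v = 0) :
    mPoly n c v
      = mPoly n c (xpt n ℓ u ((univ : Finset (Fin n)).filter (fun j : Fin n => v j = u)).card) ∧
    gf n c β₀ β β'
      (xpt n ℓ u ((univ : Finset (Fin n)).filter (fun j : Fin n => v j = u)).card) = 0 := by
  classical
  set k := ((univ : Finset (Fin n)).filter (fun j : Fin n => v j = u)).card with hk
  obtain ⟨σ, hσ⟩ := vertex_eq_xpt n ℓ u v hv
  have hm : mPoly n c v = mPoly n c (xpt n ℓ u k) := by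
    rw [← hk] at hσ
    conv_lhs => rw [hσ]
    exact mPoly_comp_perm n c (xpt n ℓ u k) σ
  refine ⟨hm, ?_⟩
  have hxv : ∀ j, xpt n ℓ u k j = ℓ ∨ xpt n ℓ u k j = u := by
    intro j; unfold xpt; split
    · exact Or.inr rfl
    · exact Or.inl rfl
  have hxX : xpt n ℓ u k ∈ Xbox n ℓ u := by
    intro j; rw [Set.mem_Icc]; unfold xpt; split
    · exact ⟨hlu.le, le_refl u⟩
    · exact ⟨le_refl ℓ, hlu.le⟩
  have hfilt : ((univ : Finset (Fin n)).filter (fun j : Fin n => xpt n ℓ u k j = u))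
      = (univ : Finset (Fin n)).filter (fun j : Fin n => (j : ℕ) < k) := by
    ext j
    simp only [Finset.mem_filter, Finset.mem_univ, true_and]
    unfold xpt
    by_cases h : (j : ℕ) < k
    · simp [h]
    · simp [h, hlu.ne]
  have hsle : ∑ j, β j * xpt n ℓ u k j ≤ ∑ j, β j * v j := by
    rw [vertex_sum n ℓ u v hv β, vertex_sum n ℓ u (xpt n ℓ u k) hxv β, hfilt]
    have hss := sum_smallest_le n k β hβ
      ((univ : Finset (Fin n)).filter (fun j : Fin n => v j = u)) hk.symm
    nlinarith [sub_nonneg.mpr hlu.le]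
  have hle : gf n c β₀ β β' (xpt n ℓ u k) ≤ gf n c β₀ β β' v := by
    unfold gf ineqLhs
    simp only
    rw [← hm]
    linarith
  exact le_antisymm (by rw [← h0]; exact hle) (gf_nonneg hvalid _ hxX)

/-- A core facet is satisfied exactly at `(x^k, m(x^k))` for at least
two indices `k ∈ {0,…,n}`, at least one of which lies in `{1,…,n-1}`. -/
theorem stmt4 (n : ℕ) (hn : 2 ≤ n) (ℓ u : ℝ) (hlu : ℓ < u) (c : ℕ → ℝ)
    (β₀ : ℝ) (β : Fin n → ℝ) (β' : ℝ)
    (hcore : IsCore n β β') (hvalid : IsValid n ℓ u c β₀ β β')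
    (hfacet : IsFacet n ℓ u c β₀ β β') :
    ∃ k₁ k₂, k₁ ≤ n ∧ k₂ ≤ n ∧ k₁ ≠ k₂ ∧
      ExactAt n β₀ β β' (vtx n ℓ u c k₁) ∧ ExactAt n β₀ β β' (vtx n ℓ u c k₂) ∧
      ((1 ≤ k₁ ∧ k₁ ≤ n - 1) ∨ (1 ≤ k₂ ∧ k₂ ≤ n - 1)) := by
  obtain ⟨hβ', hβ⟩ := hcore
  obtain ⟨pts, hAI, hpts⟩ := hfacet
  have hrank : Module.finrank ℝ (vectorSpan ℝ (Set.range pts)) = n :=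
    hAI.finrank_vectorSpan (by simp)
  have hmem : ∀ (C : Set ((Fin n → ℝ) × ℝ)), Convex ℝ C →
      (∀ v : Fin n → ℝ, (∀ j, v j = ℓ ∨ v j = u) → gf n c β₀ β β' v = 0 →
        (v, mPoly n c v) ∈ C) →
      ∀ i, pts i ∈ C := by
    intro C hC hvert i
    refine tight_mem n ℓ u c β₀ β β' hvalid C hC ?_ (pts i) (hpts i).1 (hpts i).2
    intro q hq h0q
    have hq2 : q = (q.1, mPoly n c q.1) := by rw [Prod.ext_iff]; exact ⟨rfl, hq.2⟩
    rw [hq2] at h0q ⊢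
    exact tight_ind n ℓ u hlu c β₀ β β' hvalid C hC hvert q.1 hq.1 h0q
  -- Step 1: a tight sorted vertex with index in the middle
  have step1 : ∃ k, 1 ≤ k ∧ k ≤ n - 1 ∧ gf n c β₀ β β' (xpt n ℓ u k) = 0 := by
    by_contra hno
    push_neg at hno
    have hvC : ∀ v : Fin n → ℝ, (∀ j, v j = ℓ ∨ v j = u) → gf n c β₀ β β' v = 0 →
        (v, mPoly n c v) ∈ convexHull ℝ {vtx n ℓ u c 0, vtx n ℓ u c n} := by
      intro v hv h0
      obtain ⟨hm, hxk⟩ := vertex_tight n ℓ u hlu c β₀ β β' hβ hvalid v hv h0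
      set k := ((univ : Finset (Fin n)).filter (fun j : Fin n => v j = u)).card with hk
      have hkn : k ≤ n := by
        rw [hk]
        calc ((univ : Finset (Fin n)).filter (fun j : Fin n => v j = u)).card
            ≤ (univ : Finset (Fin n)).card := Finset.card_filter_le _ _
          _ = n := by simp
      have hk0n : k = 0 ∨ k = n := by
        by_contra hcon
        push_neg at hcon
        exact hno k (by omega) (by omega) hxk
      apply subset_convexHull
      rcases hk0n with h | h
      · have hv0 : v = xpt n ℓ u 0 := by
          funext j
          have hje : ((univ : Finset (Fin n)).filter (fun j : Fin n => v j = u)) = ∅ :=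
            Finset.card_eq_zero.mp (by rw [← hk, h])
          have hju : v j ≠ u := by
            intro hju
            have : j ∈ ((univ : Finset (Fin n)).filter (fun j : Fin n => v j = u)) :=
              Finset.mem_filter.mpr ⟨Finset.mem_univ j, hju⟩
            rw [hje] at this
            exact absurd this (Finset.notMem_empty j)
          have hjl : v j = ℓ := (hv j).resolve_right hju
          simp [xpt, hjl]
        left
        rw [hv0]
        rfl
      · have hv0 : v = xpt n ℓ u n := by
          funext j
          have hje : ((univ : Finset (Fin n)).filter (fun j : Fin n => v j = u)) = univ :=
            Finset.eq_univ_of_card _ (by rw [← hk, h]; simp)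
          have hju : v j = u := by
            have : j ∈ ((univ : Finset (Fin n)).filter (fun j : Fin n => v j = u)) := by
              rw [hje]; exact Finset.mem_univ j
            exact (Finset.mem_filter.mp this).2
          simp [xpt, hju, j.2]
        right
        rw [hv0]
        rfl
    have hptsC := hmem _ (convex_convexHull ℝ _) hvC
    have hseg : ∀ i, ∃ b : ℝ,
        pts i = vtx n ℓ u c 0 + b • (vtx n ℓ u c n - vtx n ℓ u c 0) := by
      intro i
      have hmem' := hptsC i
      rw [convexHull_pair] at hmem'
      obtain ⟨a1, b1, _, _, hab1, hcomb⟩ := hmem'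
      refine ⟨b1, ?_⟩
      rw [← hcomb]
      have ha1 : a1 = 1 - b1 := by linarith
      rw [ha1]
      module
    have hspan : vectorSpan ℝ (Set.range pts)
        ≤ Submodule.span ℝ {vtx n ℓ u c n - vtx n ℓ u c 0} := by
      rw [vectorSpan_range_eq_span_range_vsub_right ℝ pts 0, Submodule.span_le]
      rintro _ ⟨i, rfl⟩
      obtain ⟨bi, hbi⟩ := hseg i
      obtain ⟨b0, hb0⟩ := hseg 0
      have hdiff : pts i -ᵥ pts 0 = (bi - b0) • (vtx n ℓ u c n - vtx n ℓ u c 0) := by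
        rw [vsub_eq_sub, hbi, hb0]
        module
      show pts i -ᵥ pts 0 ∈ Submodule.span ℝ {vtx n ℓ u c n - vtx n ℓ u c 0}
      rw [hdiff]
      exact Submodule.smul_mem _ _ (Submodule.mem_span_singleton_self _)
    have hne : vtx n ℓ u c n - vtx n ℓ u c 0 ≠ 0 := by
      intro hcon
      have h1 := congrArg (fun p : (Fin n → ℝ) × ℝ => p.1 ⟨0, by omega⟩) hcon
      simp only [Prod.fst_sub, Pi.sub_apply, Prod.fst_zero, Pi.zero_apply] at h1
      have h2 : vtx n ℓ u c n = (xpt n ℓ u n, mval n ℓ u c n) := rfl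
      have h3 : (xpt n ℓ u n) ⟨0, by omega⟩ = u := by simp [xpt]; omega
      have h4 : (xpt n ℓ u 0) ⟨0, by omega⟩ = ℓ := by simp [xpt]
      rw [show (vtx n ℓ u c n).1 = xpt n ℓ u n from rfl,
        show (vtx n ℓ u c 0).1 = xpt n ℓ u 0 from rfl, h3, h4] at h1
      have : ℓ = u := by linarith
      exact absurd this (ne_of_lt hlu)
    have hle1 : Module.finrank ℝ (vectorSpan ℝ (Set.range pts)) ≤ 1 := by
      calc Module.finrank ℝ (vectorSpan ℝ (Set.range pts))
          ≤ Module.finrank ℝ (Submodule.span ℝ {vtx n ℓ u c n - vtx n ℓ u c 0}) :=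
            Submodule.finrank_mono hspan
        _ = 1 := finrank_span_singleton hne
    omega
  obtain ⟨k₁, hk11, hk12, hk10⟩ := step1
  -- Step 2: a second tight sorted vertex
  have step2 : ∃ k₂, k₂ ≤ n ∧ k₂ ≠ k₁ ∧ gf n c β₀ β β' (xpt n ℓ u k₂) = 0 := by
    by_contra hno
    push_neg at hno
    set s : ℝ := ℓ * n + (u - ℓ) * k₁ with hs
    set tt : ℝ := mPoly n c (xpt n ℓ u k₁) with htt
    let ψ : ((Fin n → ℝ) × ℝ) →ₗ[ℝ] ℝ × ℝ :=
      { toFun := fun p => (∑ j, p.1 j, p.2)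
        map_add' := by
          intro p q
          simp [Prod.ext_iff, Finset.sum_add_distrib]
        map_smul' := by
          intro a p
          simp [Prod.ext_iff, Finset.mul_sum] }
    have hC : Convex ℝ {p : (Fin n → ℝ) × ℝ | ψ p = (s, tt)} := by
      intro p hp q hq a b ha hb hab
      simp only [Set.mem_setOf_eq] at hp hq ⊢
      rw [map_add, map_smul, map_smul, hp, hq, ← add_smul, hab, one_smul]
    have hvC : ∀ v : Fin n → ℝ, (∀ j, v j = ℓ ∨ v j = u) → gf n c β₀ β β' v = 0 →
        (v, mPoly n c v) ∈ {p : (Fin n → ℝ) × ℝ | ψ p = (s, tt)} := by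
      intro v hv h0
      obtain ⟨hm, hxk⟩ := vertex_tight n ℓ u hlu c β₀ β β' hβ hvalid v hv h0
      set k := ((univ : Finset (Fin n)).filter (fun j : Fin n => v j = u)).card with hk
      have hkn : k ≤ n := by
        rw [hk]
        calc ((univ : Finset (Fin n)).filter (fun j : Fin n => v j = u)).card
            ≤ (univ : Finset (Fin n)).card := Finset.card_filter_le _ _
          _ = n := by simp
      have hkk : k = k₁ := by
        by_contra hne
        exact hno k hkn hne hxk
      have hsum1 : ∑ j, v j = ℓ * n + (u - ℓ) * k := by
        have hvs := vertex_sum n ℓ u v hv (fun _ => 1)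
        simpa using hvs
      show ψ (v, mPoly n c v) = (s, tt)
      have hψ : ψ (v, mPoly n c v) = (∑ j, v j, mPoly n c v) := rfl
      rw [hψ, Prod.ext_iff]
      constructor
      · rw [hsum1, hkk]
      · rw [hm, hkk]
    have hptsC := hmem _ hC hvC
    have hker : vectorSpan ℝ (Set.range pts) ≤ LinearMap.ker ψ := by
      rw [vectorSpan_range_eq_span_range_vsub_right ℝ pts 0, Submodule.span_le]
      rintro _ ⟨i, rfl⟩
      show pts i -ᵥ pts 0 ∈ LinearMap.ker ψ
      rw [LinearMap.mem_ker, vsub_eq_sub, map_sub]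
      have hi : ψ (pts i) = (s, tt) := hptsC i
      have h0' : ψ (pts 0) = (s, tt) := hptsC 0
      rw [hi, h0', sub_self]
    have hsurj : Function.Surjective ψ := by
      rintro ⟨a, b⟩
      refine ⟨((fun j => if j = (⟨0, by omega⟩ : Fin n) then a else 0), b), ?_⟩
      have : (∑ j : Fin n, if j = (⟨0, by omega⟩ : Fin n) then a else 0) = a := by
        rw [Finset.sum_ite_eq' univ (⟨0, by omega⟩ : Fin n) (fun _ => a)]
        simp
      show ((∑ j : Fin n, if j = (⟨0, by omega⟩ : Fin n) then a else 0), b) = (a, b)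
      rw [this]
    have hkerrank : Module.finrank ℝ (LinearMap.ker ψ) = n - 1 := by
      have h1 := LinearMap.finrank_range_add_finrank_ker ψ
      rw [LinearMap.range_eq_top.mpr hsurj, finrank_top] at h1
      have h2 : Module.finrank ℝ (ℝ × ℝ) = 2 := by simp
      have h3 : Module.finrank ℝ ((Fin n → ℝ) × ℝ) = n + 1 := by simp
      rw [h2, h3] at h1
      omega
    have hle1 : Module.finrank ℝ (vectorSpan ℝ (Set.range pts)) ≤ n - 1 :=
      hkerrank ▸ Submodule.finrank_mono hker
    omega
  obtain ⟨k₂, hk21, hk22, hk20⟩ := step2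
  exact ⟨k₁, k₂, by omega, hk21, fun h => hk22 h.symm, hk10, hk20, Or.inl ⟨hk11, hk12⟩⟩
end
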